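/- Let φ = π/(2n+1) for a positive integer n, P(φ) = [[1, -tan φ],[0,0]] and R(φ) the rotation by angle 2φ. Then P(φ) · R(φ)^n · P(φ) = -(cos φ)⁻¹ · P(φ). -/

import Mathlib

open Real Matrix

noncomputable def P (φ : ℝ) : Matrix (Fin 2) (Fin 2) ℝ := !![1, -Real.tan φ; 0, 0]

noncomputable def R (φ : ℝ) : Matrix (Fin 2) (Fin 2) ℝ :=
  !![Real.cos (2*φ), -Real.sin (2*φ); Real.sin (2*φ), Real.cos (2*φ)]

noncomputable def opNorm (A : Matrix (Fin 2) (Fin 2) ℝ) : ℝ :=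
  ‖Matrix.toEuclideanCLM (𝕜 := ℝ) A‖

lemma Rpow (φ : ℝ) (k : ℕ) :
    (R φ) ^ k = !![Real.cos (2*k*φ), -Real.sin (2*k*φ); Real.sin (2*k*φ), Real.cos (2*k*φ)] := by
  induction k with
  | zero => simp [Matrix.one_fin_two]
  | succ k ih =>
    rw [pow_succ, ih, R]
    have h : 2 * ((k:ℝ)+1) * φ = 2*k*φ + 2*φ := by ring
    ext i j
    fin_cases i <;> fin_cases j <;>
      simp [Matrix.mul_apply, Fin.sum_univ_two, Nat.cast_succ, h, Real.cos_add, Real.sin_add] <;> ring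

theorem stmt1 (n : ℕ) (hn : 0 < n) (φ : ℝ) (hφ : φ = Real.pi / (2 * (n : ℝ) + 1)) :
    P φ * (R φ) ^ n * P φ = (-(Real.cos φ)⁻¹) • P φ := by
  have hpos : (0:ℝ) < 2 * n + 1 := by positivity
  have h2n : 2 * (n:ℝ) * φ = Real.pi - φ := by
    rw [hφ]; field_simp; ring
  have hcos : Real.cos (2*n*φ) = -Real.cos φ := by rw [h2n, Real.cos_pi_sub]
  have hsin : Real.sin (2*n*φ) = Real.sin φ := by rw [h2n, Real.sin_pi_sub]
  have hc : Real.cos φ ≠ 0 := by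
    have h1 : 0 < φ := by rw [hφ]; positivity
    have h2 : φ < Real.pi / 2 := by
      rw [hφ]
      rw [div_lt_div_iff₀ hpos two_pos]
      nlinarith [Real.pi_pos, (by exact_mod_cast hn : (1:ℝ) ≤ n)]
    exact ne_of_gt (Real.cos_pos_of_mem_Ioo ⟨by linarith, h2⟩)
  rw [Rpow, hcos, hsin, P]
  ext i j
  fin_cases i <;> fin_cases j <;>
    simp [Matrix.mul_apply, Fin.sum_univ_two, Real.tan_eq_sin_div_cos] <;>
    field_simp
  · linear_combination -(Real.sin_sq_add_cos_sq φ)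
  · linear_combination (Real.sin φ) * Real.sin_sq_add_cos_sq φ
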